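/- Let m, n be positive integers, let c be a real number with 0 < c < 1, and let s ∈ M_{m,n}(ℝ). Then s ∈ DI_{m,n}(c) if and only if there exists T ≥ 0 such that for every real t ≥ T the lattice g_t·h_s·ℤ^{m+n} contains a nonzero vector v = (v⁽¹⁾, v⁽²⁾) ∈ ℝ^m × ℝ^n with ‖v⁽¹⁾‖_∞ < c and ‖v⁽²⁾‖_∞ ≤ 1. -/

import Mathlib

open scoped BigOperators

noncomputable section

namespace DiagFlows

/-- The index type for `ℝ^{m+n}`, split into the first `m` and the last `n` coordinates. -/
abbrev Idx (m n : ℕ) := Fin m ⊕ Fin n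

/-- The space of `m × n` real matrices equipped with the Euclidean (Frobenius) norm. -/
abbrev Mspace (m n : ℕ) := EuclideanSpace ℝ (Fin m × Fin n)

/-- Interpret a point of `Mspace m n` as an `m × n` matrix. -/
def toMat {m n : ℕ} (s : Mspace m n) : Matrix (Fin m) (Fin n) ℝ :=
  Matrix.of fun i j => s (i, j)

/-- The diagonal matrix `g_t = diag(e^{nt},…,e^{nt},e^{-mt},…,e^{-mt})`. -/
def gt (m n : ℕ) (t : ℝ) : Matrix (Idx m n) (Idx m n) ℝ :=
  Matrix.diagonal (Sum.elim (fun _ => Real.exp (n * t)) (fun _ => Real.exp (-(m * t))))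

/-- The block matrix `h_s = [[1, s], [0, 1]]`. -/
def hMat {m n : ℕ} (s : Matrix (Fin m) (Fin n) ℝ) : Matrix (Idx m n) (Idx m n) ℝ :=
  Matrix.fromBlocks 1 s 0 1

/-- The set `DI_{m,n}(c)` of `c`-Dirichlet-improvable `m × n` matrices: those `s` for which
there is `N₀ > 0` such that for all real `N ≥ N₀` there are `p ∈ ℤ^m`, `q ∈ ℤ^n` with
`0 < ‖q‖_∞ ≤ N` and `‖sq - p‖_∞ < c·N^{-n/m}`.  (The norms on `Fin m → ℝ` and `Fin n → ℝ`
are the sup norms.) -/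
def DIset (m n : ℕ) (c : ℝ) : Set (Mspace m n) :=
  {s | ∃ N₀ : ℝ, 0 < N₀ ∧ ∀ N : ℝ, N₀ ≤ N →
    ∃ (p : Fin m → ℤ) (q : Fin n → ℤ),
      0 < ‖(fun j => (q j : ℝ) : Fin n → ℝ)‖ ∧
      ‖(fun j => (q j : ℝ) : Fin n → ℝ)‖ ≤ N ∧
      ‖(toMat s).mulVec (fun j => (q j : ℝ)) - (fun i => (p i : ℝ))‖ < c * N ^ (-(n : ℝ) / m)}

/-- Componentwise formula for `g_t · h_M · w`. -/
lemma mulVec_eq {m n : ℕ} (t : ℝ) (M : Matrix (Fin m) (Fin n) ℝ) (w : Idx m n → ℝ) :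
    (gt m n t * hMat M).mulVec w =
      Sum.elim
        (fun i => Real.exp (n * t) * (w (Sum.inl i) + M.mulVec (fun j => w (Sum.inr j)) i))
        (fun j => Real.exp (-(m * t)) * w (Sum.inr j)) := by
  rw [← Matrix.mulVec_mulVec]
  funext x
  cases x with
  | inl i =>
      simp [gt, hMat, Matrix.mulVec_diagonal, Matrix.fromBlocks_mulVec, Function.comp]
      rfl
  | inr j =>
      simp [gt, hMat, Matrix.mulVec_diagonal, Matrix.fromBlocks_mulVec, Function.comp]

lemma norm_fun_mul {k : ℕ} {a : ℝ} (ha : 0 ≤ a) (u : Fin k → ℝ) :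
    ‖(fun i => a * u i : Fin k → ℝ)‖ = a * ‖u‖ := by
  have h : (fun i => a * u i) = a • u := rfl
  rw [h, norm_smul, Real.norm_of_nonneg ha]

lemma one_le_norm_int {k : ℕ} {q : Fin k → ℤ} (hq : q ≠ 0) :
    1 ≤ ‖(fun j => (q j : ℝ) : Fin k → ℝ)‖ := by
  obtain ⟨j, hj⟩ := Function.ne_iff.mp hq
  have h1 : (1 : ℝ) ≤ |(q j : ℝ)| := by
    exact_mod_cast Int.one_le_abs hj
  calc (1 : ℝ) ≤ |(q j : ℝ)| := h1
    _ = ‖((fun j => (q j : ℝ) : Fin k → ℝ) j)‖ := rfl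
    _ ≤ ‖(fun j => (q j : ℝ) : Fin k → ℝ)‖ :=
      @norm_le_pi_norm (Fin k) (fun _ => ℝ) _ _ (fun j => (q j : ℝ)) j

/-- **The Dani correspondence for Dirichlet improvability.**  For positive integers `m, n`,
`0 < c < 1` and `s ∈ M_{m,n}(ℝ)`: `s ∈ DI_{m,n}(c)` if and only if there is `T ≥ 0` such
that for every real `t ≥ T` the lattice `g_t·h_s·ℤ^{m+n}` contains a nonzero vector
`v = (v⁽¹⁾, v⁽²⁾) ∈ ℝ^m × ℝ^n` with `‖v⁽¹⁾‖_∞ < c` and `‖v⁽²⁾‖_∞ ≤ 1`. -/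
theorem mem_DIset_iff (m n : ℕ) (hm : 0 < m) (hn : 0 < n)
    (c : ℝ) (hc0 : 0 < c) (hc1 : c < 1) (s : Mspace m n) :
    s ∈ DIset m n c ↔
      ∃ T : ℝ, 0 ≤ T ∧ ∀ t : ℝ, T ≤ t →
        ∃ v : Idx m n → ℝ,
          (∃ w : Idx m n → ℤ, v = (gt m n t * hMat (toMat s)).mulVec fun j => (w j : ℝ)) ∧
          v ≠ 0 ∧
          ‖(fun i => v (Sum.inl i) : Fin m → ℝ)‖ < c ∧
          ‖(fun i => v (Sum.inr i) : Fin n → ℝ)‖ ≤ 1 := by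
  have hm' : (m : ℝ) ≠ 0 := Nat.cast_ne_zero.mpr hm.ne'
  have hm0 : (0 : ℝ) < m := Nat.cast_pos.mpr hm
  set M := toMat s with hM
  constructor
  · rintro ⟨N₀, hN₀, hDI⟩
    refine ⟨max 0 (Real.log N₀ / m), le_max_left _ _, fun t ht => ?_⟩
    have ht0 : 0 ≤ t := le_trans (le_max_left _ _) ht
    have htlog : Real.log N₀ / m ≤ t := le_trans (le_max_right _ _) ht
    set N := Real.exp (m * t) with hNdef
    have hNN₀ : N₀ ≤ N := by
      have : Real.log N₀ ≤ m * t := by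
        rw [div_le_iff₀ hm0] at htlog; linarith [htlog]
      calc N₀ = Real.exp (Real.log N₀) := (Real.exp_log hN₀).symm
        _ ≤ N := Real.exp_le_exp.mpr this
    obtain ⟨p, q, hq0, hqN, hsqp⟩ := hDI N hNN₀
    have hqne : q ≠ 0 := by
      intro h
      rw [h] at hq0
      simp at hq0
      exact hq0 rfl
    set w : Idx m n → ℤ := Sum.elim (fun i => -p i) q with hw
    refine ⟨(gt m n t * hMat M).mulVec (fun j => (w j : ℝ)), ⟨w, rfl⟩, ?_, ?_, ?_⟩
    · intro hzero
      obtain ⟨j, hj⟩ := Function.ne_iff.mp hqne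
      have h2 := congrFun hzero (Sum.inr j)
      rw [mulVec_eq] at h2
      simp only [Sum.elim_inr, Pi.zero_apply] at h2
      have h3 := (mul_eq_zero.mp h2).resolve_left (Real.exp_ne_zero _)
      have h4 : (q j : ℝ) = 0 := by simpa [hw] using h3
      exact hj (by exact_mod_cast h4)
    · rw [mulVec_eq]
      have hrw : (fun i => Sum.elim
          (fun i => Real.exp (n * t) * (((w (Sum.inl i) : ℤ) : ℝ) + M.mulVec (fun j => ((w (Sum.inr j) : ℤ) : ℝ)) i))
          (fun j => Real.exp (-(m * t)) * ((w (Sum.inr j) : ℤ) : ℝ)) (Sum.inl i) : Fin m → ℝ)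
          = fun i => Real.exp (n * t) *
            ((M.mulVec (fun j => (q j : ℝ)) - fun i => (p i : ℝ)) i) := by
        funext i
        simp [hw, Matrix.mulVec]
        ring
      rw [hrw, norm_fun_mul (Real.exp_nonneg _)]
      have hpow : N ^ (-(n : ℝ) / m) = Real.exp (-(n * t)) := by
        rw [hNdef, Real.rpow_def_of_pos (Real.exp_pos _), Real.log_exp]
        congr 1
        field_simp
      have := hsqp
      rw [hpow] at this
      calc Real.exp (n * t) * ‖M.mulVec (fun j => (q j : ℝ)) - fun i => (p i : ℝ)‖
          < Real.exp (n * t) * (c * Real.exp (-(n * t))) := by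
            exact mul_lt_mul_of_pos_left this (Real.exp_pos _)
        _ = c := by rw [mul_comm c, ← mul_assoc, ← Real.exp_add]; simp
    · rw [mulVec_eq]
      have hrw : (fun j => Sum.elim
          (fun i => Real.exp (n * t) * (((w (Sum.inl i) : ℤ) : ℝ) + M.mulVec (fun j => ((w (Sum.inr j) : ℤ) : ℝ)) i))
          (fun j => Real.exp (-(m * t)) * ((w (Sum.inr j) : ℤ) : ℝ)) (Sum.inr j) : Fin n → ℝ)
          = fun j => Real.exp (-(m * t)) * ((fun j => (q j : ℝ)) j) := by
        funext j; simp [hw]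
      rw [hrw, norm_fun_mul (Real.exp_nonneg _)]
      calc Real.exp (-(m * t)) * ‖(fun j => (q j : ℝ) : Fin n → ℝ)‖
          ≤ Real.exp (-(m * t)) * N :=
            mul_le_mul_of_nonneg_left hqN (Real.exp_nonneg _)
        _ = 1 := by rw [hNdef, ← Real.exp_add]; simp
  · rintro ⟨T, hT, H⟩
    refine ⟨Real.exp (m * T), Real.exp_pos _, fun N hN => ?_⟩
    have hNpos : 0 < N := lt_of_lt_of_le (Real.exp_pos _) hN
    set t := Real.log N / m with htdef
    have hmt : m * t = Real.log N := by rw [htdef]; field_simp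
    have htT : T ≤ t := by
      have h1 : m * T ≤ Real.log N := by
        calc m * T = Real.log (Real.exp (m * T)) := (Real.log_exp _).symm
          _ ≤ Real.log N := Real.log_le_log (Real.exp_pos _) hN
      rw [← hmt] at h1
      exact le_of_mul_le_mul_left h1 hm0
    have ht0 : 0 ≤ t := le_trans hT htT
    obtain ⟨v, ⟨w, hv⟩, hvne, hv1, hv2⟩ := H t htT
    rw [mulVec_eq] at hv
    set q : Fin n → ℤ := fun j => w (Sum.inr j) with hq
    set p : Fin m → ℤ := fun i => -w (Sum.inl i) with hp
    have hqne : q ≠ 0 := by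
      intro hqz
      have hz : ∀ j, w (Sum.inr j) = 0 := fun j => congrFun hqz j
      have hMz : M.mulVec (fun j => ((w (Sum.inr j) : ℤ) : ℝ)) = 0 := by
        have : (fun j => ((w (Sum.inr j) : ℤ) : ℝ)) = 0 := by
          funext j; simp [hz j]
        rw [this, Matrix.mulVec_zero]
      have hvinr : ∀ j, v (Sum.inr j) = 0 := by
        intro j
        rw [hv]
        simp [hz j]
      have hwl : ∃ i, w (Sum.inl i) ≠ 0 := by
        by_contra hall
        push_neg at hall
        apply hvne
        funext x
        cases x with
        | inl i =>
            rw [hv]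
            simp [hall i, congrFun hMz i]
        | inr j => exact hvinr j
      obtain ⟨i, hi⟩ := hwl
      -- then ‖v¹‖ ≥ exp(nt) ≥ 1 > c, contradiction
      have hbig : (1 : ℝ) ≤ ‖(fun i => v (Sum.inl i) : Fin m → ℝ)‖ := by
        have hcomp : ∀ i', v (Sum.inl i') = Real.exp (n * t) * (w (Sum.inl i') : ℝ) := by
          intro i'
          rw [hv]
          simp [congrFun hMz i']
        have h1 : (1 : ℝ) ≤ |(w (Sum.inl i) : ℝ)| := by exact_mod_cast Int.one_le_abs hi
        have h2 : (1 : ℝ) ≤ |v (Sum.inl i)| := by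
          rw [hcomp i, abs_mul, abs_of_pos (Real.exp_pos _)]
          have hexp : (1 : ℝ) ≤ Real.exp (n * t) :=
            Real.one_le_exp (by positivity)
          nlinarith
        calc (1 : ℝ) ≤ |v (Sum.inl i)| := h2
          _ = ‖(fun i => v (Sum.inl i) : Fin m → ℝ) i‖ := rfl
          _ ≤ _ := @norm_le_pi_norm (Fin m) (fun _ => ℝ) _ _ (fun i => v (Sum.inl i)) i
      linarith
    refine ⟨p, q, ?_, ?_, ?_⟩
    · have h := one_le_norm_int hqne
      linarith
    · have hcomp : (fun j => (q j : ℝ) : Fin n → ℝ)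
          = fun j => Real.exp (m * t) * v (Sum.inr j) := by
        funext j
        rw [hv]
        simp [hq, ← mul_assoc, ← Real.exp_add]
      rw [hcomp, norm_fun_mul (Real.exp_nonneg _)]
      calc Real.exp (m * t) * ‖(fun j => v (Sum.inr j) : Fin n → ℝ)‖
          ≤ Real.exp (m * t) * 1 := mul_le_mul_of_nonneg_left hv2 (Real.exp_nonneg _)
        _ = N := by rw [mul_one, hmt, Real.exp_log hNpos]
    · have hpow : N ^ (-(n : ℝ) / m) = Real.exp (-(n * t)) := by
        rw [Real.rpow_def_of_pos hNpos, ← hmt]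
        congr 1
        field_simp
      have hcomp : (M.mulVec (fun j => (q j : ℝ)) - fun i => (p i : ℝ))
          = fun i => Real.exp (-(n * t)) * v (Sum.inl i) := by
        funext i
        simp only [Pi.sub_apply]
        rw [hv]
        simp only [Sum.elim_inl, ← mul_assoc, ← Real.exp_add, neg_add_cancel,
          Real.exp_zero, one_mul]
        simp only [hp, hq]
        push_cast
        ring
      rw [hcomp, norm_fun_mul (Real.exp_nonneg _), hpow, mul_comm c]
      exact mul_lt_mul_of_pos_left hv1 (Real.exp_pos _)


end DiagFlows
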